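/- (Imaginary quarter-period iK′ shift in intrinsic form.) Let k ∈ ℂ, let (S, C, D) be a Jacobi triple with modulus k, and let κ ∈ ℂ with κ² = k, κ ≠ 0. On the open set U = { z ∈ ℂ : S(z) ≠ 0 }, the triple (z ↦ 1/(κ·S(z)), z ↦ −i·D(z)/(κ·S(z)), z ↦ −i·C(z)/S(z)) satisfies system (1) with the same modulus k. (This corresponds to sn(x+iK′|k) = ns(x|k)/√k, cn(x+iK′|k) = −i ds(x|k)/√k, dn(x+iK′|k) = −i cs(x|k).) -/

import Mathlib

/-- A Jacobi triple with modulus `k`: the model is `(sn(·|k), cn(·|k), dn(·|k))`. -/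
def IsJacobiTriple (k : ℂ) (S C D : ℂ → ℂ) : Prop :=
  ∀ z : ℂ, HasDerivAt S (C z * D z) z ∧ HasDerivAt C (-(S z * D z)) z ∧
    HasDerivAt D (-(k * S z * C z)) z ∧
    S z ^ 2 + C z ^ 2 = 1 ∧ D z ^ 2 + k * S z ^ 2 = 1

/-- A triple `(St, Ct, Dt)` satisfies system (1) with modulus `m` on `U`:
at every point of `U` the functions are differentiable with `St′ = Ct·Dt`,
and `St² + Ct² = 1` and `Dt² + m·St² = 1` hold on `U`. -/
def SatisfiesSystem1 (m : ℂ) (St Ct Dt : ℂ → ℂ) (U : Set ℂ) : Prop :=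
  ∀ z ∈ U, HasDerivAt St (Ct z * Dt z) z ∧
    DifferentiableAt ℂ Ct z ∧ DifferentiableAt ℂ Dt z ∧
    St z ^ 2 + Ct z ^ 2 = 1 ∧ Dt z ^ 2 + m * St z ^ 2 = 1

theorem stmt_12 (k : ℂ) (S C D : ℂ → ℂ) (hJ : IsJacobiTriple k S C D)
    (κ : ℂ) (hκ : κ ^ 2 = k) (hκ0 : κ ≠ 0) :
    SatisfiesSystem1 k
      (fun z => 1 / (κ * S z))
      (fun z => -Complex.I * D z / (κ * S z))
      (fun z => -Complex.I * C z / S z)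
      {z : ℂ | S z ≠ 0} := by

  intro z hz
  simp only [Set.mem_setOf_eq] at hz
  obtain ⟨hS, hC, hD, h1, h2⟩ := hJ z
  have hκS : κ * S z ≠ 0 := mul_ne_zero hκ0 hz
  have hSd : DifferentiableAt ℂ S z := hS.differentiableAt
  have hCd : DifferentiableAt ℂ C z := hC.differentiableAt
  have hDd : DifferentiableAt ℂ D z := hD.differentiableAt
  refine ⟨?_, ?_, ?_, ?_, ?_⟩
  · have h : HasDerivAt (fun z => κ * S z) (κ * (C z * D z)) z := hS.const_mul κ
    have h' := h.inv hκS
    have hh : HasDerivAt (fun z => 1 / (κ * S z)) (-(κ * (C z * D z)) / (κ * S z) ^ 2) z := by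
      rw [show (fun z => 1 / (κ * S z)) = (fun z => κ * S z)⁻¹ from funext fun w => by simp [one_div]]
      exact h'
    convert hh using 1
    field_simp
    linear_combination C z * D z * Complex.I_sq
  · exact ((differentiableAt_const _).mul hDd).div ((differentiableAt_const _).mul hSd) hκS
  · exact ((differentiableAt_const _).mul hCd).div hSd hz
  · field_simp
    linear_combination (D z)^2*Complex.I_sq - h2 - (S z)^2*hκ
  · field_simp
    linear_combination κ^2*(C z)^2*Complex.I_sq - hκ - κ^2*h1
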